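/- Let p be a prime, a, m positive integers, M = ℤ_{p^a}^m, and f : M → M an automorphism. Let M_{a−1} be the p^{a−1}-torsion subgroup and let c be the maximum cycle length of the automorphism induced by f on M/M_{a−1} ≅ ℤ_p^m. Then every cycle length of f divides p^{a−1} c. -/

import Mathlib

open Polynomial

section OrdLemmas

variable {K : Type*} [Field K] {W : Type*} [AddCommGroup W] [Module (Polynomial K) W]

/-- `d` generates the annihilator ideal of `x`. -/
def IsOrdAux (x : W) (d : Polynomial K) : Prop := ∀ P : Polynomial K, P • x = 0 ↔ d ∣ P

lemma exists_isOrdAux (x : W) {P : Polynomial K} (hP : P ≠ 0) (hPx : P • x = 0) :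
    ∃ d : Polynomial K, d ≠ 0 ∧ IsOrdAux x d := by
  set I := Ideal.torsionOf (Polynomial K) W x with hI
  refine ⟨Submodule.IsPrincipal.generator I, ?_, ?_⟩
  · intro h0
    have hPI : P ∈ I := by rw [hI, Ideal.mem_torsionOf_iff]; exact hPx
    rw [Submodule.IsPrincipal.mem_iff_generator_dvd, h0] at hPI
    exact hP (zero_dvd_iff.1 hPI)
  · intro Q
    rw [← Submodule.IsPrincipal.mem_iff_generator_dvd, hI, Ideal.mem_torsionOf_iff]

lemma IsOrdAux.smul {y : W} {d π e : Polynomial K} (hπ : π ≠ 0)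
    (hd : IsOrdAux y d) (hde : d = π * e) : IsOrdAux (π • y) e := by
  intro P
  rw [smul_smul, hd, hde, mul_comm P π, mul_dvd_mul_iff_left hπ]

lemma IsOrdAux.add_coprime {x y : W} {dx dy : Polynomial K}
    (hx : IsOrdAux x dx) (hy : IsOrdAux y dy) (h : IsCoprime dx dy) :
    IsOrdAux (x + y) (dx * dy) := by
  intro P
  constructor
  · intro hP
    have hP' : ∀ Q : Polynomial K, (Q * P) • (x + y) = 0 := fun Q => by
      rw [mul_smul, hP, smul_zero]
    have hxx : (dy * P) • x = 0 := by
      have hyy : (dy * P) • y = 0 := by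
        rw [mul_comm, mul_smul, (hy dy).2 dvd_rfl, smul_zero]
      have := hP' dy; rw [smul_add, hyy, add_zero] at this; exact this
    have hyy2 : (dx * P) • y = 0 := by
      have hxx2 : (dx * P) • x = 0 := by
        rw [mul_comm, mul_smul, (hx dx).2 dvd_rfl, smul_zero]
      have := hP' dx; rw [smul_add, hxx2, zero_add] at this; exact this
    exact h.mul_dvd (h.dvd_of_dvd_mul_left ((hx _).1 hxx))
      (h.symm.dvd_of_dvd_mul_left ((hy _).1 hyy2))
  · intro hP
    have h1 : P • x = 0 := (hx P).2 (dvd_trans (Dvd.intro _ rfl) hP)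
    have h2 : P • y = 0 := (hy P).2 (dvd_trans (Dvd.intro_left _ rfl) hP)
    rw [smul_add, h1, h2, add_zero]

private lemma isUnit_of_natDegree_zero {d : Polynomial K} (hd : d ≠ 0)
    (h : d.natDegree = 0) : IsUnit d := by
  obtain ⟨c, rfl⟩ := Polynomial.natDegree_eq_zero.1 h
  exact (Polynomial.isUnit_C).2 (Ne.isUnit (fun h0 => hd (by rw [h0, map_zero])))

private lemma isCoprime_of_isUnit_left {d e : Polynomial K} (hd : IsUnit d) :
    IsCoprime d e := by
  obtain ⟨u, rfl⟩ := hd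
  exact ⟨(↑u⁻¹ : Polynomial K), 0, by simp⟩

end OrdLemmas

section Descent

variable {K : Type*} [Field K] {W : Type*} [AddCommGroup W] [Module (Polynomial K) W]

private lemma lcm_coprime_case {x y : W} {dx dy : Polynomial K} (hdx : dx ≠ 0) (hdy : dy ≠ 0)
    (hx : IsOrdAux x dx) (hy : IsOrdAux y dy) (hcop : IsCoprime dx dy) :
    ∃ (z : W) (e : Polynomial K), e ≠ 0 ∧ IsOrdAux z e ∧
      ∀ P : Polynomial K, e ∣ P ↔ dx ∣ P ∧ dy ∣ P :=
  ⟨x + y, dx * dy, mul_ne_zero hdx hdy, hx.add_coprime hy hcop,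
    fun P => ⟨fun h => ⟨dvd_trans (Dvd.intro _ rfl) h, dvd_trans (Dvd.intro_left _ rfl) h⟩,
      fun h => hcop.mul_dvd h.1 h.2⟩⟩

lemma exists_isOrdAux_lcm : ∀ (n : ℕ) (x y : W) (dx dy : Polynomial K),
    dx.natDegree + dy.natDegree ≤ n → dx ≠ 0 → dy ≠ 0 → IsOrdAux x dx → IsOrdAux y dy →
    ∃ (z : W) (e : Polynomial K), e ≠ 0 ∧ IsOrdAux z e ∧
      ∀ P : Polynomial K, e ∣ P ↔ dx ∣ P ∧ dy ∣ P := by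
  intro n
  induction n with
  | zero =>
      intro x y dx dy hdeg hdx hdy hx hy
      refine lcm_coprime_case hdx hdy hx hy ?_
      exact isCoprime_of_isUnit_left (isUnit_of_natDegree_zero hdx (by omega))
  | succ n ih =>
      intro x y dx dy hdeg hdx hdy hx hy
      classical
      by_cases hcop : IsCoprime dx dy
      · exact lcm_coprime_case hdx hdy hx hy hcop
      -- find a common irreducible factor
      have hg0 : EuclideanDomain.gcd dx dy ≠ 0 := fun h =>
        hdx (EuclideanDomain.gcd_eq_zero_iff.1 h).1
      have hgu : ¬IsUnit (EuclideanDomain.gcd dx dy) := fun h =>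
        hcop ((EuclideanDomain.gcd_isUnit_iff).1 h)
      obtain ⟨π, hπ, hπg⟩ := WfDvdMonoid.exists_irreducible_factor hgu hg0
      have hπdx : π ∣ dx := hπg.trans (EuclideanDomain.gcd_dvd_left _ _)
      have hπdy : π ∣ dy := hπg.trans (EuclideanDomain.gcd_dvd_right _ _)
      have hπ0 : π ≠ 0 := hπ.ne_zero
      have hπdeg : 0 < π.natDegree := hπ.natDegree_pos
      obtain ⟨i, ex, hnex, hdxe⟩ := WfDvdMonoid.max_power_factor hdx hπ
      obtain ⟨j, ey, hney, hdye⟩ := WfDvdMonoid.max_power_factor hdy hπ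
      have hex0 : ex ≠ 0 := right_ne_zero_of_mul (hdxe ▸ hdx)
      have hey0 : ey ≠ 0 := right_ne_zero_of_mul (hdye ▸ hdy)
      have hi : 1 ≤ i := by
        by_contra h
        have h0 : i = 0 := by omega
        subst h0
        simp only [pow_zero, one_mul] at hdxe
        exact absurd (hdxe ▸ hπdx) hnex
      have hj : 1 ≤ j := by
        by_contra h
        have h0 : j = 0 := by omega
        subst h0
        simp only [pow_zero, one_mul] at hdye
        exact absurd (hdye ▸ hπdy) hney
      have hdegx : dx.natDegree = i * π.natDegree + ex.natDegree := by
        rw [hdxe, Polynomial.natDegree_mul (pow_ne_zero _ hπ0) hex0,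
          Polynomial.natDegree_pow]
      have hdegy : dy.natDegree = j * π.natDegree + ey.natDegree := by
        rw [hdye, Polynomial.natDegree_mul (pow_ne_zero _ hπ0) hey0,
          Polynomial.natDegree_pow]
      rcases le_total j i with hji | hij
      · -- purify y
        have hy' : IsOrdAux ((π ^ j : Polynomial K) • y) ey :=
          hy.smul (pow_ne_zero _ hπ0) hdye
        obtain ⟨z, e, he0, hze, hiff⟩ := ih x ((π ^ j : Polynomial K) • y) dx ey
          (by nlinarith) hdx hey0 hx hy'
        refine ⟨z, e, he0, hze, fun P => (hiff P).trans ?_⟩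
        constructor
        · rintro ⟨h1, h2⟩
          refine ⟨h1, hdye ▸ (((hπ.coprime_iff_not_dvd.2 hney).pow_left).mul_dvd ?_ h2)⟩
          exact dvd_trans (dvd_trans (pow_dvd_pow π hji) ⟨ex, hdxe⟩) h1
        · rintro ⟨h1, h2⟩
          exact ⟨h1, dvd_trans ⟨π ^ j, by rw [hdye, mul_comm]⟩ h2⟩
      · -- purify x
        have hx' : IsOrdAux ((π ^ i : Polynomial K) • x) ex :=
          hx.smul (pow_ne_zero _ hπ0) hdxe
        obtain ⟨z, e, he0, hze, hiff⟩ := ih ((π ^ i : Polynomial K) • x) y ex dy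
          (by nlinarith) hex0 hdy hx' hy
        refine ⟨z, e, he0, hze, fun P => (hiff P).trans ?_⟩
        constructor
        · rintro ⟨h1, h2⟩
          refine ⟨hdxe ▸ (((hπ.coprime_iff_not_dvd.2 hnex).pow_left).mul_dvd ?_ h1), h2⟩
          exact dvd_trans (dvd_trans (pow_dvd_pow π hij) ⟨ey, hdye⟩) h2
        · rintro ⟨h1, h2⟩
          exact ⟨dvd_trans ⟨π ^ i, by rw [hdxe, mul_comm]⟩ h1, h2⟩

end Descent

/-- In any ring, `(1 + p • C) ^ (p ^ k) = 1 + p^(k+1) • D` for some `D`. -/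
lemma one_add_nsmul_pow_prime_pow {S : Type*} [Ring S] (p : ℕ) (C : S) (k : ℕ) :
    ∃ D : S, (1 + p • C) ^ (p ^ k) = 1 + p ^ (k + 1) • D := by
  induction k with
  | zero => exact ⟨C, by simp⟩
  | succ k ih =>
      obtain ⟨D, hD⟩ := ih
      set z : S := (p ^ (k+1) : ℕ) • D with hz
      have hexp : (1 + (p:ℕ) • C) ^ (p ^ (k+1)) = (z + 1) ^ p := by
        rw [pow_succ, pow_mul, hD, add_comm]
      have hdvd : ∀ i : ℕ, p ^ (k+2) ∣ (p ^ (k+1)) ^ (i+1) * p.choose (i+1) := by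
        intro i
        rcases Nat.eq_zero_or_pos i with rfl | hi
        · rw [pow_one, Nat.choose_one_right, pow_succ]
        · refine Dvd.dvd.mul_right ?_ _
          rw [← pow_mul]
          exact pow_dvd_pow p (by nlinarith)
      refine ⟨∑ i ∈ Finset.range p,
        (((p ^ (k+1)) ^ (i+1) * p.choose (i+1)) / p ^ (k+2)) • D ^ (i+1), ?_⟩
      rw [hexp, (Commute.one_right z).add_pow, Finset.sum_range_succ']
      have hterm : ∀ i : ℕ,
          z ^ (i+1) * 1 ^ (p - (i+1)) * (p.choose (i+1) : S) =
          p ^ (k+2) • ((((p ^ (k+1)) ^ (i+1) * p.choose (i+1)) / p ^ (k+2)) • D ^ (i+1)) := by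
        intro i
        rw [one_pow, mul_one, hz, _root_.smul_pow, smul_mul_assoc,
          (Nat.cast_commute (p.choose (i+1)) (D ^ (i+1))).symm.eq, ← nsmul_eq_mul, smul_smul,
          smul_smul, Nat.mul_div_cancel' (hdvd i)]
      rw [Finset.sum_congr rfl (fun i _ => hterm i)]
      rw [← Finset.smul_sum]
      simp [show 1+(k+1) = k+2 from by omega, add_comm]

lemma zmod_exists_eq_mul {p a : ℕ} (hp : p ≠ 0) (ha : 1 ≤ a) (x : ZMod (p ^ a))
    (hx : (p ^ (a - 1) : ℕ) • x = 0) : ∃ y : ZMod (p ^ a), x = p * y := by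
  haveI : NeZero (p ^ a) := ⟨pow_ne_zero a hp⟩
  have h1 : ((p ^ (a-1) * x.val : ℕ) : ZMod (p ^ a)) = 0 := by
    rw [Nat.cast_mul, ZMod.natCast_zmod_val, ← nsmul_eq_mul]
    exact hx
  rw [ZMod.natCast_eq_zero_iff] at h1
  have h2 : p ^ (a-1) * p ∣ p ^ (a-1) * x.val := by
    have : p ^ (a-1) * p = p ^ a := by
      rw [← pow_succ]
      congr 1
      omega
    rwa [this]
  have h3 : p ∣ x.val := (Nat.mul_dvd_mul_iff_left (Nat.pos_of_ne_zero
    (pow_ne_zero _ hp))).1 h2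
  obtain ⟨y0, hy0⟩ := h3
  exact ⟨(y0 : ZMod (p ^ a)), by rw [← ZMod.natCast_zmod_val x, hy0, Nat.cast_mul]⟩



open Polynomial in
private lemma stepA_M {p c : ℕ} [Fact p.Prime] {G : Type*} [AddCommGroup G]
    (N : AddSubgroup G) [Module (ZMod p) (G ⧸ N)]
    (f : G ≃+ G) (hfN : ∀ v ∈ N, f v ∈ N)
    (n₀ : ℕ) (hn₀pos : 0 < n₀) (hper : ∀ v : G, (⇑f)^[n₀] v = v)
    (hc : IsGreatest {t | ∃ u : G, IsLeast {t' | 0 < t' ∧ (⇑f)^[t'] u - u ∈ N} t} c) :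
    ∀ x : G, (⇑f)^[c] x - x ∈ N := by
  have fbar0 : G ⧸ N →+ G ⧸ N :=
    QuotientAddGroup.map N N f.toAddMonoidHom (fun v hv => hfN v hv)
  set gbar : G ⧸ N →ₗ[ZMod p] G ⧸ N :=
    { toFun := QuotientAddGroup.map N N f.toAddMonoidHom (fun v hv => hfN v hv),
      map_add' := map_add _, map_smul' := by
        intro z q
        obtain ⟨k, rfl⟩ := ZMod.intCast_surjective z
        show QuotientAddGroup.map N N f.toAddMonoidHom (fun v hv => hfN v hv) ((k : ZMod p) • q) = _
        rw [RingHom.id_apply, Int.cast_smul_eq_zsmul, Int.cast_smul_eq_zsmul, map_zsmul] }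
    with hgbar
  have hgbar_mk : ∀ v : G, gbar ((v : G ⧸ N)) = ((f v : G) : G ⧸ N) := by
    intro v
    show QuotientAddGroup.map N N f.toAddMonoidHom (fun v hv => hfN v hv) ((v : G ⧸ N)) = _
    exact QuotientAddGroup.map_mk N N f.toAddMonoidHom (fun v hv => hfN v hv) v
  have hgbar_pow : ∀ (n : ℕ) (v : G), (gbar ^ n) ((v : G ⧸ N)) = (((⇑f)^[n] v : G) : G ⧸ N) := by
    intro n
    induction n with
    | zero => intro v; simp
    | succ n ih =>
        intro v
        rw [pow_succ', Module.End.mul_apply, ih, hgbar_mk, Function.iterate_succ_apply']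
  set ofW : (G ⧸ N) ≃ₗ[ZMod p] Module.AEval' gbar := Module.AEval'.of gbar with hofW
  have hbr : ∀ (n : ℕ) (v : G),
      (((X : (ZMod p)[X]) ^ n - 1) • (ofW (v : G ⧸ N)) = 0) ↔ (⇑f)^[n] v - v ∈ N := by
    intro n v
    have h1 : ((X : (ZMod p)[X]) ^ n - 1) • (ofW (v : G ⧸ N)) =
        ofW ((aeval gbar ((X : (ZMod p)[X]) ^ n - 1)) • (v : G ⧸ N)) :=
      (Module.AEval.of_aeval_smul gbar _ _).symm
    have h2 : (aeval gbar ((X : (ZMod p)[X]) ^ n - 1)) • ((v : G ⧸ N))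
        = (((⇑f)^[n] v - v : G) : G ⧸ N) := by
      rw [Module.End.smul_def, map_sub, map_pow, aeval_X, map_one, LinearMap.sub_apply,
        Module.End.one_apply, hgbar_pow, QuotientAddGroup.mk_sub]
    rw [h1, h2, LinearEquiv.map_eq_zero_iff, QuotientAddGroup.eq_zero_iff]
  have hXn : ∀ n : ℕ, 0 < n → ((X : (ZMod p)[X]) ^ n - 1) ≠ 0 := by
    intro n hn
    have := Polynomial.X_pow_sub_C_ne_zero hn (1 : ZMod p)
    rwa [map_one] at this
  have hvord : ∀ v : G, ∃ d : (ZMod p)[X], d ≠ 0 ∧ IsOrdAux (ofW (v : G ⧸ N)) d := by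
    intro v
    refine exists_isOrdAux _ (hXn n₀ hn₀pos) ?_
    rw [hbr, hper v, sub_self]
    exact zero_mem N
  have hSne : ∀ w : G, {t' | 0 < t' ∧ (⇑f)^[t'] w - w ∈ N}.Nonempty := by
    intro w
    exact ⟨n₀, hn₀pos, by rw [hper w, sub_self]; exact zero_mem N⟩
  have hleast : ∀ w : G, IsLeast {t' | 0 < t' ∧ (⇑f)^[t'] w - w ∈ N}
      (sInf {t' | 0 < t' ∧ (⇑f)^[t'] w - w ∈ N}) := fun w =>
    ⟨Nat.sInf_mem (hSne w), fun b hb => Nat.sInf_le hb⟩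
  intro x
  obtain ⟨u₀, hu₀⟩ := hc.1
  obtain ⟨dx, hdx0, hdx⟩ := hvord x
  obtain ⟨dy, hdy0, hdy⟩ := hvord u₀
  obtain ⟨z, eP, he0, hord, hiff⟩ := exists_isOrdAux_lcm (dx.natDegree + dy.natDegree)
    (ofW (x : G ⧸ N)) (ofW (u₀ : G ⧸ N)) dx dy le_rfl hdx0 hdy0 hdx hdy
  obtain ⟨q, hq⟩ := ofW.surjective z
  obtain ⟨w, rfl⟩ := QuotientAddGroup.mk_surjective q
  set t : ℕ := sInf {t' | 0 < t' ∧ (⇑f)^[t'] w - w ∈ N} with hts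
  have hlw := hleast w
  have htc : t ≤ c := hc.2 ⟨w, hlw⟩
  have htS := hlw.1
  have hzt : ((X : (ZMod p)[X]) ^ t - 1) • z = 0 := by
    rw [← hq, hbr]
    exact htS.2
  have he_dvd : eP ∣ (X : (ZMod p)[X]) ^ t - 1 := (hord _).1 hzt
  have hdy_dvd : dy ∣ (X : (ZMod p)[X]) ^ t - 1 := ((hiff _).1 he_dvd).2
  have hct : c ≤ t := hu₀.2 ⟨htS.1, (hbr t u₀).1 ((hdy _).2 hdy_dvd)⟩
  have htceq : t = c := le_antisymm htc hct
  rw [htceq] at he_dvd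
  have hdx_dvd : dx ∣ (X : (ZMod p)[X]) ^ c - 1 := ((hiff _).1 he_dvd).1
  rw [← hbr c x]
  exact (hdx _).2 hdx_dvd

theorem stmt_11 (p : ℕ) (hp : p.Prime) (a m : ℕ) (ha : 1 ≤ a) (hm : 1 ≤ m)
    (f : (Fin m → ZMod (p ^ a)) ≃+ (Fin m → ZMod (p ^ a)))
    (Mtor : ℕ → AddSubgroup (Fin m → ZMod (p ^ a)))
    (hMtor : ∀ i v, v ∈ Mtor i ↔ p ^ i • v = 0)
    (c : ℕ)
    -- `c` is the maximal cycle length of the automorphism induced by `f` on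
    -- `M / Mtor (a-1) ≅ (ℤ/p)^m`, where the cycle length of the image of `u`
    -- is the least positive `t` with `f^[t] u ≡ u mod Mtor (a-1)`
    (hc : IsGreatest {t | ∃ u : Fin m → ZMod (p ^ a),
      IsLeast {t' | 0 < t' ∧ (⇑f)^[t'] u - u ∈ Mtor (a - 1)} t} c) :
    ∀ u : Fin m → ZMod (p ^ a),
      Function.minimalPeriod (⇑f) u ∣ p ^ (a - 1) * c := by
  haveI : Fact p.Prime := ⟨hp⟩
  haveI : NeZero (p ^ a) := ⟨pow_ne_zero a hp.ne_zero⟩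
  set M : Type := Fin m → ZMod (p ^ a) with hM
  set N : AddSubgroup M := Mtor (a - 1) with hN
  have ha' : a - 1 + 1 = a := by omega
  -- basic facts
  have hcharM : ∀ v : M, (p ^ a : ℕ) • v = 0 := by
    intro v; funext i
    show (p ^ a : ℕ) • v i = 0
    rw [nsmul_eq_mul, Nat.cast_pow]
    norm_num [show ((p : ZMod (p ^ a)))^a = ((p^a : ℕ) : ZMod (p^a)) by push_cast; ring,
      ZMod.natCast_self]
  have hmemN : ∀ v : M, v ∈ N ↔ (p ^ (a - 1) : ℕ) • v = 0 := fun v => hMtor (a - 1) v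
  have hpN : ∀ v : M, (p : ℕ) • v ∈ N := by
    intro v
    rw [hmemN, smul_smul, ← pow_succ, ha']
    exact hcharM v
  have hfN : ∀ v : M, v ∈ N → f v ∈ N := by
    intro v hv
    rw [hmemN] at hv ⊢
    rw [← map_nsmul, hv, map_zero]
  -- global periodicity
  set e : Equiv.Perm M := f.toEquiv with he
  set n₀ : ℕ := orderOf e with hn₀
  have hn₀pos : 0 < n₀ := orderOf_pos e
  have hper : ∀ v : M, (⇑f)^[n₀] v = v := by
    intro v
    have h1 : (⇑f)^[n₀] = ⇑(e ^ n₀) := by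
      rw [← Equiv.Perm.iterate_eq_pow]
      congr 1
    rw [h1, pow_orderOf_eq_one e]
    rfl
  -- linear version of f
  set fl : M →ₗ[ZMod (p ^ a)] M :=
    { toFun := ⇑f, map_add' := map_add f, map_smul' := by
        intro z x
        obtain ⟨k, rfl⟩ := ZMod.intCast_surjective z
        show f ((k : ZMod (p ^ a)) • x) = (k : ZMod (p ^ a)) • f x
        rw [Int.cast_smul_eq_zsmul, Int.cast_smul_eq_zsmul, map_zsmul] } with hfl
  have hflpow : ∀ (n : ℕ) (v : M), (fl ^ n) v = (⇑f)^[n] v := by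
    intro n v
    rw [Module.End.pow_apply]
    rfl
  -- Step A via the quotient lemma
  haveI : NeZero p := ⟨hp.ne_zero⟩
  letI instQ : Module (ZMod p) (M ⧸ N) := QuotientAddGroup.zmodModule hpN
  have hA : ∀ x : M, (⇑f)^[c] x - x ∈ N :=
    stepA_M (p := p) N f hfN n₀ hn₀pos hper hc
  -- Step B : matrix argument
  have hA' : ∀ x : M, (p ^ (a - 1) : ℕ) • ((fl ^ c) x - x) = 0 := by
    intro x
    rw [hflpow]
    exact (hmemN _).1 (hA x)
  set B : Matrix (Fin m) (Fin m) (ZMod (p ^ a)) := LinearMap.toMatrixAlgEquiv' (fl ^ c) with hB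
  have hent : ∀ i j, ∃ y : ZMod (p ^ a),
      B i j - (1 : Matrix (Fin m) (Fin m) (ZMod (p ^ a))) i j = p * y := by
    intro i j
    apply zmod_exists_eq_mul hp.ne_zero ha
    set s : M := (fun j' => if j' = j then 1 else 0) with hs
    have h1 : B i j - (1 : Matrix (Fin m) (Fin m) (ZMod (p ^ a))) i j
        = ((fl ^ c) s - s) i := by
      rw [hB, LinearMap.toMatrixAlgEquiv'_apply, Matrix.one_apply]
      simp only [Pi.sub_apply, hs]
      rw [show (Pi.single j 1 : M) = s from funext fun j' => Pi.single_apply j 1 j']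
      rfl
    rw [h1]
    have := congrFun (hA' s) i
    exact this
  set CM : Matrix (Fin m) (Fin m) (ZMod (p ^ a)) :=
    Matrix.of (fun i j => Classical.choose (hent i j)) with hCM
  have hBC : B = 1 + (p : ℕ) • CM := by
    ext i j
    have hspec := Classical.choose_spec (hent i j)
    rw [Matrix.add_apply, Matrix.smul_apply, nsmul_eq_mul]
    rw [sub_eq_iff_eq_add] at hspec
    rw [hspec]
    exact add_comm _ _
  obtain ⟨D, hD⟩ := one_add_nsmul_pow_prime_pow p CM (a - 1)
  have hpaD : (p ^ (a - 1 + 1) : ℕ) • D = 0 := by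
    ext i j
    rw [Matrix.smul_apply, nsmul_eq_mul, ha', Nat.cast_pow]
    have : ((p : ZMod (p ^ a))) ^ a = ((p ^ a : ℕ) : ZMod (p ^ a)) := by push_cast; ring
    rw [this, ZMod.natCast_self, zero_mul]
    rfl
  have hBpow : B ^ (p ^ (a - 1)) = 1 := by
    rw [hBC, hD, hpaD, add_zero]
  have hflpow1 : (fl ^ c) ^ (p ^ (a - 1)) = 1 := by
    apply LinearMap.toMatrixAlgEquiv'.injective
    rw [map_pow, map_one, ← hB, hBpow]
  intro u
  have hfix : (⇑f)^[p ^ (a - 1) * c] u = u := by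
    have h1 : (fl ^ (p ^ (a - 1) * c)) u = u := by
      rw [mul_comm, pow_mul, hflpow1, Module.End.one_apply]
    rw [← hflpow]
    exact h1
  exact Function.IsPeriodicPt.minimalPeriod_dvd hfix
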